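/- Let r_1,…,r_n be generators of 𝕊. Then the residues h(r_1) mod n, …, h(r_n) mod n are pairwise distinct and exhaust ℤ/nℤ. -/

import Mathlib

open Polynomial

/-- The height of an `n`-dimensional vector polynomial `p = (P_1, ..., P_n)`:
`h(p) = max (n * deg P_j + j - 1)` over `1 <= j <= n`, taken in `Z union {-infty}`,
with `deg 0 = -infty` and `h(0) = -infty`.  (Entries are indexed by `j : Fin n`,
so `j.val` plays the role of `j - 1`.) -/
noncomputable def height (n : ℕ) (p : Fin n → ℂ[X]) : WithBot ℤ :=
  Finset.univ.sup fun j => if p j = 0 then (⊥ : WithBot ℤ)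
    else (((n * (p j).natDegree + j.val : ℕ) : ℤ) : WithBot ℤ)

/-- The solution set `S` of the interpolation problem: all vector polynomials
`p` such that the linear combination of the entries evaluated at the node `z j`
with coefficients `α j` vanishes, for every node `j`. -/
def Sol (n N : ℕ) (z : Fin N → ℂ) (α : Fin N → Fin n → ℂ) : Set (Fin n → ℂ[X]) :=
  {p | ∀ j : Fin N, ∑ k : Fin n, α j k * (p k).eval (z j) = 0}

/-- `M(r_1) + ... + M(r_(j-1))`: the set of combinations of scalar-polynomial
multiples of the `r_l` with `l < j` (for `j = 0` this set is `{0}`). -/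
def prevSet (n : ℕ) (r : Fin n → (Fin n → ℂ[X])) (j : Fin n) : Set (Fin n → ℂ[X]) :=
  {q | ∃ S : Fin n → ℂ[X], q = ∑ l ∈ Finset.univ.filter (fun l => l < j), S l • r l}

/-- `r_1, ..., r_n` are generators of the solution set `S`: each `r_j` belongs
to `S \ (M(r_1) + ... + M(r_(j-1)))` and has minimal height among the elements
of that set.  (For `j = 1` this says that `r_1` is a nonzero element of `S` of
minimal height.) -/
def IsGenerators (n N : ℕ) (z : Fin N → ℂ) (α : Fin N → Fin n → ℂ)
    (r : Fin n → (Fin n → ℂ[X])) : Prop :=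
  ∀ j : Fin n, r j ∈ Sol n N z α ∧ r j ∉ prevSet n r j ∧
    ∀ q ∈ Sol n N z α, q ∉ prevSet n r j → height n (r j) ≤ height n q

/-! ### Auxiliary lemmas -/

lemma height_le_aux (n : ℕ) (p : Fin n → ℂ[X]) (a : ℕ)
    (h : height n p = ((a : ℤ) : WithBot ℤ)) (l : Fin n) (hl : p l ≠ 0) :
    n * (p l).natDegree + l.val ≤ a := by
  unfold height at h
  have h1 := Finset.le_sup (f := fun j => if p j = 0 then (⊥ : WithBot ℤ)
      else (((n * (p j).natDegree + j.val : ℕ) : ℤ) : WithBot ℤ)) (Finset.mem_univ l)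
  rw [h, if_neg hl] at h1
  exact_mod_cast h1

lemma height_spec (n : ℕ) (p : Fin n → ℂ[X]) (a : ℕ)
    (h : height n p = ((a : ℤ) : WithBot ℤ)) :
    ∃ k : Fin n, p k ≠ 0 ∧ n * (p k).natDegree + k.val = a ∧ a % n = k.val := by
  rcases (Finset.univ : Finset (Fin n)).eq_empty_or_nonempty with he | hne
  · unfold height at h
    rw [he, Finset.sup_empty] at h
    exact absurd h (by simp)
  · obtain ⟨k, -, hk⟩ := Finset.exists_mem_eq_sup (Finset.univ : Finset (Fin n)) hne
      (fun j => if p j = 0 then (⊥ : WithBot ℤ)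
        else (((n * (p j).natDegree + j.val : ℕ) : ℤ) : WithBot ℤ))
    unfold height at h
    rw [hk] at h
    by_cases hpk : p k = 0
    · rw [if_pos hpk] at h
      exact absurd h (by simp)
    · rw [if_neg hpk] at h
      have heq : n * (p k).natDegree + k.val = a := by exact_mod_cast h
      exact ⟨k, hpk, heq, by rw [← heq, Nat.mul_add_mod, Nat.mod_eq_of_lt k.isLt]⟩

lemma height_exists (n : ℕ) (p : Fin n → ℂ[X]) (hp : p ≠ 0) :
    ∃ a : ℕ, height n p = ((a : ℤ) : WithBot ℤ) := by
  obtain ⟨k, hk0⟩ := Function.ne_iff.mp hp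
  have hk : p k ≠ 0 := by simpa using hk0
  have hne : (Finset.univ : Finset (Fin n)).Nonempty := ⟨k, Finset.mem_univ k⟩
  obtain ⟨b, -, hb⟩ := Finset.exists_mem_eq_sup (Finset.univ : Finset (Fin n)) hne
    (fun j => if p j = 0 then (⊥ : WithBot ℤ)
      else (((n * (p j).natDegree + j.val : ℕ) : ℤ) : WithBot ℤ))
  have hb' : height n p = if p b = 0 then (⊥ : WithBot ℤ)
      else (((n * (p b).natDegree + b.val : ℕ) : ℤ) : WithBot ℤ) := hb
  by_cases hpb : p b = 0
  · exfalso
    have hle := Finset.le_sup (f := fun j => if p j = 0 then (⊥ : WithBot ℤ)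
        else (((n * (p j).natDegree + j.val : ℕ) : ℤ) : WithBot ℤ)) (Finset.mem_univ k)
    rw [hb, if_pos hpb, if_neg hk] at hle
    exact WithBot.not_coe_le_bot _ hle
  · exact ⟨n * (p b).natDegree + b.val, by rw [hb', if_neg hpb]⟩

lemma height_lt_aux (n : ℕ) (p : Fin n → ℂ[X]) (a : ℕ) (k : Fin n)
    (h : height n p = ((a : ℤ) : WithBot ℤ)) (hk : a % n = k.val)
    (l : Fin n) (hl : p l ≠ 0) (hlk : l ≠ k) :
    n * (p l).natDegree + l.val < a := by
  refine lt_of_le_of_ne (height_le_aux n p a h l hl) (fun hc => hlk (Fin.ext ?_))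
  have : a % n = l.val := by rw [← hc, Nat.mul_add_mod, Nat.mod_eq_of_lt l.isLt]
  omega

/-- The key reduction lemma: if the heights of `p` and `q` have the same residue
mod `n`, and `h(q) ≤ h(p)`, then some scalar multiple of `q` can be subtracted
from `p` to decrease the height. -/
lemma reduce (n : ℕ) (hn : 1 ≤ n) (p q : Fin n → ℂ[X]) (a b : ℕ)
    (hp : height n p = ((a : ℤ) : WithBot ℤ))
    (hq : height n q = ((b : ℤ) : WithBot ℤ))
    (hmod : a % n = b % n) (hba : b ≤ a) :
    ∃ S : ℂ[X], height n (p - S • q) < ((a : ℤ) : WithBot ℤ) := by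
  obtain ⟨k, hpk, hka, hamod⟩ := height_spec n p a hp
  obtain ⟨k', hqk', hkb, hbmod⟩ := height_spec n q b hq
  have hkk : k' = k := Fin.ext (by omega)
  subst hkk
  -- degree comparison
  have hdeg_le : (q k').natDegree ≤ (p k').natDegree := by
    have h1 : n * (q k').natDegree + k'.val ≤ n * (p k').natDegree + k'.val := by
      rw [hka, hkb]; exact hba
    have h2 : n * (q k').natDegree ≤ n * (p k').natDegree := Nat.le_of_add_le_add_right h1
    exact Nat.le_of_mul_le_mul_left h2 (by omega)
  set d : ℕ := (p k').natDegree - (q k').natDegree with hd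
  have hdd : (p k').natDegree = (q k').natDegree + d := by omega
  have hmul : n * (p k').natDegree = n * (q k').natDegree + n * d := by
    rw [hdd, Nat.mul_add]
  have hnda : n * d + b = a := by
    have := hka
    rw [hmul] at this
    omega
  set c : ℂ := (p k').leadingCoeff / (q k').leadingCoeff with hc
  have hqlc : (q k').leadingCoeff ≠ 0 := leadingCoeff_ne_zero.mpr hqk'
  have hplc : (p k').leadingCoeff ≠ 0 := leadingCoeff_ne_zero.mpr hpk
  have hc0 : c ≠ 0 := div_ne_zero hplc hqlc
  refine ⟨C c * X ^ d, ?_⟩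
  set S : ℂ[X] := C c * X ^ d with hS
  have hSnd : S.natDegree = d := natDegree_C_mul_X_pow d c hc0
  have hSlc : S.leadingCoeff = c := by
    rw [hS, leadingCoeff_mul, leadingCoeff_C, leadingCoeff_X_pow, mul_one]
  unfold height
  rw [Finset.sup_lt_iff (WithBot.bot_lt_coe (a : ℤ))]
  intro l _
  by_cases h0 : (p - S • q) l = 0
  · rw [if_pos h0]; exact WithBot.bot_lt_coe _
  · rw [if_neg h0]
    have hentry : (p - S • q) l = p l - S * q l := by
      simp [Pi.sub_apply, Pi.smul_apply, smul_eq_mul]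
    rw [hentry] at h0 ⊢
    have key : n * (p l - S * q l).natDegree + l.val < a := by
      by_cases hlk : l = k'
      · subst hlk
        have hdsum : d + (q l).natDegree = (p l).natDegree := by omega
        have hdq : (S * q l).degree = (p l).degree := by
          rw [degree_mul, hS, degree_C_mul_X_pow _ hc0, degree_eq_natDegree hqk',
            degree_eq_natDegree hpk, ← Nat.cast_add, hdsum]
        have hlceq : (S * q l).leadingCoeff = (p l).leadingCoeff := by
          rw [leadingCoeff_mul, hSlc, hc, div_mul_cancel₀ _ hqlc]
        have hdlt : ((p l) - S * q l).degree < (p l).degree :=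
          degree_sub_lt hdq.symm hpk hlceq.symm
        have hndlt : ((p l) - S * q l).natDegree < (p l).natDegree :=
          natDegree_lt_natDegree h0 hdlt
        have := Nat.mul_lt_mul_of_pos_left hndlt (show 0 < n by omega)
        omega
      · -- l ≠ k'
        have hFp : p l ≠ 0 → n * (p l).natDegree + l.val < a :=
          fun hpl => height_lt_aux n p a k' hp hamod l hpl hlk
        have hFq : q l ≠ 0 → n * (S * q l).natDegree + l.val < a := by
          intro hql
          have h1 : (S * q l).natDegree ≤ d + (q l).natDegree :=
            le_trans (natDegree_mul_le) (by rw [hSnd])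
          have h2 : n * (q l).natDegree + l.val < b :=
            height_lt_aux n q b k' hq hbmod l hql hlk
          have h3 : n * (S * q l).natDegree ≤ n * (d + (q l).natDegree) :=
            Nat.mul_le_mul_left n h1
          rw [Nat.mul_add] at h3
          omega
        by_cases hpl : p l = 0
        · have hdiff : p l - S * q l = -(S * q l) := by rw [hpl]; ring
          have hql : q l ≠ 0 := by
            intro h
            apply h0
            rw [hpl, h, mul_zero, sub_zero]
          rw [hdiff, natDegree_neg]
          exact hFq hql
        · by_cases hql : q l = 0
          · rw [hql, mul_zero, sub_zero]
            exact hFp hpl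
          · have hmax := natDegree_sub_le (p l) (S * q l)
            rcases le_max_iff.mp hmax with h | h
            · have := Nat.mul_le_mul_left n h
              have := hFp hpl
              omega
            · have := Nat.mul_le_mul_left n h
              have := hFq hql
              omega
    exact_mod_cast key

lemma zero_mem_prevSet (n : ℕ) (r : Fin n → (Fin n → ℂ[X])) (j : Fin n) :
    (0 : Fin n → ℂ[X]) ∈ prevSet n r j :=
  ⟨0, by simp⟩

lemma prevSet_mono (n : ℕ) (r : Fin n → (Fin n → ℂ[X])) {i j : Fin n} (hij : i ≤ j) :
    prevSet n r i ⊆ prevSet n r j := by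
  rintro q ⟨S, rfl⟩
  refine ⟨fun l => if l < i then S l else 0, ?_⟩
  have hsub : Finset.univ.filter (fun l => l < i) ⊆ Finset.univ.filter (fun l => l < j) := by
    intro x hx
    simp only [Finset.mem_filter, Finset.mem_univ, true_and] at hx ⊢
    exact lt_of_lt_of_le hx hij
  have h1 : ∑ l ∈ Finset.univ.filter (fun l => l < i), S l • r l
      = ∑ l ∈ Finset.univ.filter (fun l => l < i), (if l < i then S l else 0) • r l :=
    Finset.sum_congr rfl (fun l hl => by
      simp only [Finset.mem_filter, Finset.mem_univ, true_and] at hl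
      rw [if_pos hl])
  rw [h1]
  exact Finset.sum_subset hsub (fun x _ hx => by
    simp only [Finset.mem_filter, Finset.mem_univ, true_and] at hx
    rw [if_neg hx, zero_smul])

lemma add_smul_mem_prevSet (n : ℕ) (r : Fin n → (Fin n → ℂ[X])) {i j : Fin n}
    (hij : i < j) {q : Fin n → ℂ[X]} (hq : q ∈ prevSet n r j) (S₀ : ℂ[X]) :
    q + S₀ • r i ∈ prevSet n r j := by
  obtain ⟨S, rfl⟩ := hq
  refine ⟨fun l => S l + if l = i then S₀ else 0, ?_⟩
  have hi : i ∈ Finset.univ.filter (fun l => l < j) := by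
    simp only [Finset.mem_filter, Finset.mem_univ, true_and]
    exact hij
  simp only [add_smul, Finset.sum_add_distrib, ite_smul, zero_smul]
  rw [Finset.sum_ite_eq' (Finset.univ.filter (fun l => l < j)) i (fun l => S₀ • r l), if_pos hi]

lemma sub_smul_mem_Sol {n N : ℕ} {z : Fin N → ℂ} {α : Fin N → Fin n → ℂ}
    {p q : Fin n → ℂ[X]} (hp : p ∈ Sol n N z α) (hq : q ∈ Sol n N z α) (S : ℂ[X]) :
    p - S • q ∈ Sol n N z α := by
  intro j
  have h1 := hp j
  have h2 := hq j
  simp only [Pi.sub_apply, Pi.smul_apply, smul_eq_mul, eval_sub, eval_mul, mul_sub,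
    Finset.sum_sub_distrib]
  rw [h1]
  have h3 : ∑ k : Fin n, α j k * (S.eval (z j) * (q k).eval (z j))
      = S.eval (z j) * ∑ k : Fin n, α j k * (q k).eval (z j) := by
    rw [Finset.mul_sum]
    exact Finset.sum_congr rfl (fun k _ => by ring)
  rw [h3, h2, mul_zero, sub_zero]

/-- The heights of the generators `r_1, ..., r_n` of `S` have pairwise
distinct residues modulo `n`, and these residues exhaust `ℤ/nℤ`: the map
`j ↦ h(r_j) mod n` is a bijection onto `ZMod n`. -/
theorem stmt_15 (n N : ℕ) (hn : 1 ≤ n) (hN : 1 ≤ N)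
    (z : Fin N → ℂ) (α : Fin N → Fin n → ℂ)
    (hα : ∀ j : Fin N, 0 < ∑ k : Fin n, ‖α j k‖)
    (r : Fin n → (Fin n → ℂ[X])) (hr : IsGenerators n N z α r) :
    ∃ H : Fin n → ℕ,
      (∀ j : Fin n, height n (r j) = ((H j : ℤ) : WithBot ℤ)) ∧
      Function.Bijective (fun j : Fin n => ((H j : ZMod n))) := by
  haveI : NeZero n := ⟨by omega⟩
  have hr0 : ∀ j, r j ≠ 0 := fun j h => (hr j).2.1 (h ▸ zero_mem_prevSet n r j)
  choose H hH using fun j => height_exists n (r j) (hr0 j)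
  refine ⟨H, hH, ?_⟩
  rw [Fintype.bijective_iff_injective_and_card]
  refine ⟨?_, by simp [ZMod.card]⟩
  intro i j hij
  by_contra hne
  have hmod : H i % n = H j % n := (ZMod.natCast_eq_natCast_iff _ _ _).mp hij
  have main : ∀ i j : Fin n, i < j → H i % n = H j % n → False := by
    intro i j hlt hm
    have hji_not : r j ∉ prevSet n r i :=
      fun h => (hr j).2.1 (prevSet_mono n r (le_of_lt hlt) h)
    have hle : H i ≤ H j := by
      have h1 := (hr i).2.2 (r j) (hr j).1 hji_not
      rw [hH i, hH j] at h1
      exact_mod_cast h1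
    obtain ⟨S, hS⟩ := reduce n hn (r j) (r i) (H j) (H i) (hH j) (hH i) hm.symm hle
    have hsol : r j - S • r i ∈ Sol n N z α := sub_smul_mem_Sol (hr j).1 (hr i).1 S
    have hnotprev : r j - S • r i ∉ prevSet n r j := by
      intro hmem
      apply (hr j).2.1
      have h2 := add_smul_mem_prevSet n r hlt hmem S
      simpa using h2
    have h3 := (hr j).2.2 _ hsol hnotprev
    rw [hH j] at h3
    exact absurd (lt_of_le_of_lt h3 hS) (lt_irrefl _)
  rcases lt_or_gt_of_ne hne with h | h
  · exact main i j h hmod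
  · exact main j i h hmod.symm
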